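/- Let H ∈ (0,1), H ≠ 1/2, θ = 1. Then lim_{t→∞} t^{2−2H} · 2H|2H−1| e^{−2t} ∫₀^t e^u ( ∫₀^u e^v (u+v)^{2H−2} dv ) du = H|2H−1| 2^{2H−2}. -/

import Mathlib

open Real Filter intervalIntegral MeasureTheory Set

noncomputable def g8 (a u : ℝ) : ℝ := ∫ v in (0:ℝ)..u, Real.exp (-v) * (2*u - v) ^ a

noncomputable def G8 (a u : ℝ) : ℝ :=
  ∫ v, Set.indicator {q : ℝ × ℝ | 0 < q.2 ∧ q.2 ≤ q.1}
    (fun q => Real.exp (-q.2) * (2*q.1 - q.2) ^ a) (u, v)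

lemma lem1 (a u : ℝ) :
    (∫ v in (0:ℝ)..u, Real.exp v * (u+v)^a)
      = Real.exp u * ∫ v in (0:ℝ)..u, Real.exp (-v) * (2*u - v) ^ a := by
  have h := intervalIntegral.integral_comp_sub_left (a := 0) (b := u)
    (fun x => Real.exp x * (u + x) ^ a) u
  simp only [sub_self, sub_zero] at h
  rw [← h, ← intervalIntegral.integral_const_mul]
  apply intervalIntegral.integral_congr
  intro v _
  simp only [sub_eq_add_neg u v, Real.exp_add]
  rw [show u + (u + -v) = 2*u - v from by ring, mul_assoc]

lemma G8_meas (a : ℝ) : Measurable (G8 a) := by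
  have hΦ : Measurable (Set.indicator {q : ℝ × ℝ | 0 < q.2 ∧ q.2 ≤ q.1}
      (fun q => Real.exp (-q.2) * (2*q.1 - q.2) ^ a)) := by
    apply Measurable.indicator
    · fun_prop
    · exact MeasurableSet.inter (measurableSet_lt measurable_const measurable_snd)
        (measurableSet_le measurable_snd measurable_fst)
  exact (hΦ.stronglyMeasurable.integral_prod_right').measurable

lemma g8_eq_G8 (a : ℝ) {u : ℝ} (hu : 0 ≤ u) : g8 a u = G8 a u := by
  rw [g8, intervalIntegral.integral_of_le hu, G8]
  have : (fun v => Set.indicator {q : ℝ × ℝ | 0 < q.2 ∧ q.2 ≤ q.1}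
      (fun q => Real.exp (-q.2) * (2*q.1 - q.2) ^ a) (u, v))
      = Set.indicator (Set.Ioc (0:ℝ) u) (fun v => Real.exp (-v) * (2*u - v) ^ a) := by
    funext v
    simp only [Set.indicator_apply, Set.mem_setOf_eq, Set.mem_Ioc]
  rw [this, MeasureTheory.integral_indicator measurableSet_Ioc]

lemma g8_nonneg (a : ℝ) {u : ℝ} (hu : 0 ≤ u) : 0 ≤ g8 a u := by
  apply intervalIntegral.integral_nonneg hu
  intro v hv
  have : (0:ℝ) ≤ 2*u - v := by nlinarith [hv.1, hv.2]
  positivity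

lemma g8_le (a : ℝ) (ha : a ≤ 0) {u : ℝ} (hu : 0 < u) : |g8 a u| ≤ u ^ a * u := by
  have h := intervalIntegral.norm_integral_le_of_norm_le_const
    (C := u ^ a) (f := fun v => Real.exp (-v) * (2*u - v) ^ a) (a := 0) (b := u) ?_
  · simpa [abs_of_pos hu, g8] using h
  · intro v hv
    rw [Set.uIoc_of_le hu.le] at hv
    have h1 : Real.exp (-v) ≤ 1 := by
      rw [Real.exp_le_one_iff]; linarith [hv.1]
    have h2 : (2*u - v) ^ a ≤ u ^ a :=
      Real.rpow_le_rpow_of_nonpos hu (by linarith [hv.2]) ha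
    have h3 : (0:ℝ) ≤ (2*u - v) ^ a := Real.rpow_nonneg (by linarith [hv.1, hv.2]) a
    rw [Real.norm_eq_abs, abs_mul, abs_of_pos (Real.exp_pos _), abs_of_nonneg h3]
    calc Real.exp (-v) * (2*u - v) ^ a ≤ 1 * (u ^ a) := mul_le_mul h1 h2 h3 zero_le_one
    _ = u ^ a := one_mul _

lemma f_intble (a : ℝ) (ha : -2 < a) (ha' : a ≤ 0) {t : ℝ} (ht : 0 ≤ t) :
    IntervalIntegrable (fun u => Real.exp (2*u) * g8 a u) volume 0 t := by
  rw [intervalIntegrable_iff_integrableOn_Ioc_of_le ht]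
  have hbd : IntegrableOn (fun u : ℝ => Real.exp (2*t) * u ^ (a+1)) (Set.Ioc 0 t) volume := by
    have := (intervalIntegral.intervalIntegrable_rpow' (a := 0) (b := t)
      (by linarith : (-1:ℝ) < a + 1))
    rw [intervalIntegrable_iff_integrableOn_Ioc_of_le ht] at this
    exact this.const_mul _
  apply MeasureTheory.Integrable.mono' hbd
  · have hm : AEStronglyMeasurable (fun u => Real.exp (2*u) * G8 a u)
        (volume.restrict (Set.Ioc (0:ℝ) t)) := by
      exact ((measurable_const.mul measurable_id').exp.mul (G8_meas a)).aestronglyMeasurable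
    apply hm.congr
    filter_upwards [self_mem_ae_restrict (measurableSet_Ioc)] with u hu
    rw [g8_eq_G8 a hu.1.le]
  · filter_upwards [self_mem_ae_restrict (measurableSet_Ioc)] with u hu
    rw [Real.norm_eq_abs, abs_mul, abs_of_pos (Real.exp_pos _)]
    have h1 : |g8 a u| ≤ u ^ a * u := g8_le a ha' hu.1
    have h2 : Real.exp (2*u) ≤ Real.exp (2*t) := by
      apply Real.exp_le_exp.2; linarith [hu.2]
    calc Real.exp (2*u) * |g8 a u| ≤ Real.exp (2*t) * (u ^ a * u) := by
          apply mul_le_mul h2 h1 (abs_nonneg _) (Real.exp_pos _).le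
    _ = Real.exp (2*t) * u ^ (a+1) := by
          rw [Real.rpow_add_one (ne_of_gt hu.1)]

lemma inner_tendsto (a : ℝ) (ha : a ≤ 0) :
    Tendsto (fun u => u ^ (-a) * g8 a u) atTop (nhds (2 ^ a)) := by
  set F : ℝ → ℝ → ℝ := fun u => Set.indicator (Set.Ioc 0 u)
    (fun v => Real.exp (-v) * ((2*u - v)/u) ^ a) with hF
  set flim : ℝ → ℝ := Set.indicator (Set.Ioi 0) (fun v => Real.exp (-v) * 2 ^ a) with hflim
  have key : Tendsto (fun u => ∫ v, F u v) atTop (nhds (∫ v, flim v)) := by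
    apply MeasureTheory.tendsto_integral_filter_of_dominated_convergence
      (bound := Set.indicator (Set.Ioi (0:ℝ)) (fun v => Real.exp (-v)))
    · filter_upwards with u
      apply Measurable.aestronglyMeasurable
      apply Measurable.indicator (by fun_prop) measurableSet_Ioc
    · filter_upwards [eventually_gt_atTop (0:ℝ)] with u hu
      filter_upwards with v
      by_cases hv : v ∈ Set.Ioc 0 u
      · rw [hF]
        simp only [Set.indicator_of_mem hv]
        rw [Set.indicator_of_mem (Set.mem_of_mem_of_subset hv Set.Ioc_subset_Ioi_self)]
        have hratio : (1:ℝ) ≤ (2*u - v)/u := by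
          rw [le_div_iff₀ hu]; linarith [hv.2]
        have h1 : ((2*u - v)/u) ^ a ≤ 1 := Real.rpow_le_one_of_one_le_of_nonpos hratio ha
        have h2 : (0:ℝ) ≤ ((2*u - v)/u) ^ a := Real.rpow_nonneg (by linarith) a
        rw [Real.norm_eq_abs, abs_mul, abs_of_pos (Real.exp_pos _), abs_of_nonneg h2]
        nlinarith [Real.exp_pos (-v)]
      · rw [hF]
        simp only [Set.indicator_of_notMem hv, norm_zero]
        exact Set.indicator_nonneg (fun x _ => (Real.exp_pos _).le) v
    · apply MeasureTheory.IntegrableOn.integrable_indicator _ measurableSet_Ioi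
      have := exp_neg_integrableOn_Ioi 0 (zero_lt_one)
      simpa using this
    · filter_upwards with v
      rcases le_or_gt v 0 with hv | hv
      · have h1 : ∀ u, F u v = 0 := by
          intro u; rw [hF]
          apply Set.indicator_of_notMem
          simp only [Set.mem_Ioc, not_and_or]; left; linarith
        have h2 : flim v = 0 := by
          apply Set.indicator_of_notMem; simpa using hv
        simp only [h1, h2]; exact tendsto_const_nhds
      · have h2 : flim v = Real.exp (-v) * 2 ^ a := Set.indicator_of_mem hv _
        rw [h2]
        apply Tendsto.congr' (f₁ := fun u => Real.exp (-v) * ((2*u - v)/u) ^ a)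
        · filter_upwards [eventually_ge_atTop v, eventually_gt_atTop (0:ℝ)] with u hu hu0
          rw [hF]
          simp only [Set.indicator_of_mem (Set.mem_Ioc.2 ⟨hv, hu⟩)]
        · apply Tendsto.const_mul
          have hbase : Tendsto (fun u : ℝ => (2*u - v)/u) atTop (nhds 2) := by
            apply Tendsto.congr' (f₁ := fun u : ℝ => 2 - v/u)
            · filter_upwards [eventually_gt_atTop (0:ℝ)] with u hu0
              field_simp
            · have : Tendsto (fun u : ℝ => v/u) atTop (nhds 0) :=
                Tendsto.div_atTop tendsto_const_nhds tendsto_id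
              simpa using tendsto_const_nhds.sub this
          have hc : ContinuousAt (fun x : ℝ => x ^ a) 2 :=
            Real.continuousAt_rpow_const 2 a (Or.inl two_ne_zero)
          exact hc.tendsto.comp hbase
  have hval : (∫ v, flim v) = 2 ^ a := by
    rw [hflim, MeasureTheory.integral_indicator measurableSet_Ioi]
    rw [MeasureTheory.integral_mul_const, integral_exp_neg_Ioi_zero, one_mul]
  rw [hval] at key
  apply key.congr'
  filter_upwards [eventually_gt_atTop (0:ℝ)] with u hu
  rw [hF]
  rw [MeasureTheory.integral_indicator measurableSet_Ioc,
    ← intervalIntegral.integral_of_le hu.le, g8, ← intervalIntegral.integral_const_mul]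
  apply intervalIntegral.integral_congr
  intro v hv
  rw [Set.uIcc_of_le hu.le] at hv
  have h1 : (0:ℝ) ≤ 2*u - v := by nlinarith [hv.1, hv.2]
  show Real.exp (-v) * ((2*u - v)/u) ^ a = u ^ (-a) * (Real.exp (-v) * (2*u - v) ^ a)
  rw [Real.div_rpow h1 hu.le, Real.rpow_neg hu.le]
  ring

lemma half_int : ∫ x in Set.Ioi (0:ℝ), Real.exp (-(2*x)) = 1/2 := by
  have h := MeasureTheory.integral_Ioi_of_hasDerivAt_of_tendsto'
    (f := fun x : ℝ => -Real.exp (-(2*x))/2) (f' := fun x : ℝ => Real.exp (-(2*x))) (a := 0)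
    (m := 0) ?_ ?_ ?_
  · rw [h]; norm_num
  · intro x _
    have hd : HasDerivAt (fun x : ℝ => -(2*x)) (-2) x := by
      simpa using ((hasDerivAt_id x).const_mul (-2 : ℝ))
    have h2 := (hd.exp).neg.div_const (2:ℝ)
    rw [show Real.exp (-(2*x)) = -(Real.exp (-(2*x)) * -2) / 2 by ring]
    exact h2
  · have := exp_neg_integrableOn_Ioi 0 (two_pos (α := ℝ))
    simpa [neg_mul] using this
  · have h0 := tendsto_rpow_mul_exp_neg_mul_atTop_nhds_zero 0 2 two_pos
    have h2 : Tendsto (fun x : ℝ => Real.exp (-(2*x))) atTop (nhds 0) := by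
      apply h0.congr'
      filter_upwards [eventually_gt_atTop (0:ℝ)] with x hx
      rw [Real.rpow_zero, one_mul, neg_mul]
    simpa using (h2.neg.div_const 2)

lemma exp_ind_int : Integrable (Set.indicator (Set.Ioi (0:ℝ)) (fun x => Real.exp (-x))) volume := by
  apply MeasureTheory.IntegrableOn.integrable_indicator _ measurableSet_Ioi
  have := exp_neg_integrableOn_Ioi 0 (zero_lt_one (α := ℝ))
  simpa using this

set_option maxHeartbeats 2000000 in
lemma outer_tendsto (a : ℝ) (ha : -2 < a) (ha0 : a < 0) :
    Tendsto (fun t => t ^ (-a) * (Real.exp (-(2*t)) * ∫ u in (0:ℝ)..t, Real.exp (2*u) * g8 a u))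
      atTop (nhds (2 ^ a / 2)) := by
  set M : ℝ := 2 ^ a + 1 with hM
  have hMpos : 0 < M := by positivity
  -- choose T
  have hev : ∀ᶠ u in atTop, u ^ (-a) * g8 a u < M :=
    (inner_tendsto a ha0.le).eventually_lt_const (lt_add_one _)
  obtain ⟨T0, hT0⟩ := eventually_atTop.1 (hev.and (eventually_ge_atTop (1:ℝ)))
  set T : ℝ := max T0 1 with hT
  have hT1 : (1:ℝ) ≤ T := le_max_right _ _
  have hTbd : ∀ u, T ≤ u → 0 ≤ u ^ (-a) * g8 a u ∧ u ^ (-a) * g8 a u ≤ M := by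
    intro u hu
    have h1 := hT0 u (le_trans (le_max_left _ _) hu)
    have hu0 : (0:ℝ) < u := lt_of_lt_of_le one_pos (le_trans hT1 hu)
    exact ⟨mul_nonneg (Real.rpow_nonneg hu0.le _) (g8_nonneg a hu0.le), h1.1.le⟩
  set C : ℝ := ∫ u in (0:ℝ)..T, Real.exp (2*u) * g8 a u with hC
  have term1 : Tendsto (fun t : ℝ => t ^ (-a) * Real.exp (-(2*t)) * C) atTop (nhds 0) := by
    have h := (tendsto_rpow_mul_exp_neg_mul_atTop_nhds_zero (-a) 2 two_pos).mul_const C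
    rw [zero_mul] at h
    apply h.congr
    intro t
    rw [neg_mul]
  set P : ℝ → ℝ → ℝ := fun t => Set.indicator (Set.Ioc 0 (t - T))
    (fun x => Real.exp (-(2*x)) * (((t - x)/t) ^ a * ((t - x) ^ (-a) * G8 a (t - x)))) with hP
  have term2 : Tendsto (fun t => ∫ x, P t x) atTop (nhds (2 ^ a / 2)) := by
    set flim : ℝ → ℝ := Set.indicator (Set.Ioi 0) (fun x => Real.exp (-(2*x)) * 2 ^ a)
      with hflim
    have key : Tendsto (fun t => ∫ x, P t x) atTop (nhds (∫ x, flim x)) := by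
      apply MeasureTheory.tendsto_integral_filter_of_dominated_convergence
        (bound := fun x => (2 ^ (-a) * M + M) *
          Set.indicator (Set.Ioi (0:ℝ)) (fun x => Real.exp (-x)) x)
      · filter_upwards with t
        apply Measurable.aestronglyMeasurable
        apply Measurable.indicator _ measurableSet_Ioc
        have hG : Measurable fun x : ℝ => G8 a (t - x) :=
          (G8_meas a).comp (measurable_const.sub measurable_id)
        have m1 : Measurable fun x : ℝ => Real.exp (-(2*x)) := by fun_prop
        have m2 : Measurable fun x : ℝ => ((t - x)/t) ^ a := by fun_prop
        have m3 : Measurable fun x : ℝ => (t - x) ^ (-a) := by fun_prop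
        exact m1.mul (m2.mul (m3.mul hG))
      · have hexpev : ∀ᶠ t : ℝ in atTop, t ^ (-a) * Real.exp (-(1/2) * t) < 1 :=
          (tendsto_rpow_mul_exp_neg_mul_atTop_nhds_zero (-a) (1/2)
            (by norm_num)).eventually_lt_const one_pos
        filter_upwards [eventually_ge_atTop T, eventually_gt_atTop (0:ℝ), hexpev]
          with t ht ht0 hexp
        filter_upwards with x
        by_cases hx : x ∈ Set.Ioc 0 (t - T)
        · obtain ⟨hx0, hx2⟩ := hx
          have hu : T ≤ t - x := by linarith
          have hu0 : (0:ℝ) < t - x := lt_of_lt_of_le (by linarith) hu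
          have hchi_eq : (t - x) ^ (-a) * G8 a (t - x)
              = (t - x) ^ (-a) * g8 a (t - x) := by rw [g8_eq_G8 a hu0.le]
          have hχ := hTbd (t - x) hu
          have hχ0 : 0 ≤ (t - x) ^ (-a) * G8 a (t - x) := by rw [hchi_eq]; exact hχ.1
          have hχM : (t - x) ^ (-a) * G8 a (t - x) ≤ M := by rw [hchi_eq]; exact hχ.2
          have hr0 : (0:ℝ) < (t - x)/t := div_pos hu0 ht0
          have hra0 : (0:ℝ) ≤ ((t - x)/t) ^ a := Real.rpow_nonneg hr0.le a
          have hval : ‖P t x‖ = Real.exp (-(2*x)) *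
              (((t - x)/t) ^ a * ((t - x) ^ (-a) * G8 a (t - x))) := by
            simp only [hP, Set.indicator_of_mem (Set.mem_Ioc.2 ⟨hx0, hx2⟩), Real.norm_eq_abs]
            exact abs_of_nonneg (mul_nonneg (Real.exp_pos _).le (mul_nonneg hra0 hχ0))
          rw [hval, Set.indicator_of_mem (Set.mem_Ioi.2 hx0)]
          have hKM : (0:ℝ) ≤ 2 ^ (-a) * M := mul_nonneg (Real.rpow_nonneg two_pos.le _) hMpos.le
          rcases le_or_gt x (t/2) with hcase | hcase
          · have hr : (1:ℝ)/2 ≤ (t - x)/t := by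
              rw [le_div_iff₀ ht0]; linarith
            have h1 : ((t - x)/t) ^ a ≤ ((1:ℝ)/2) ^ a :=
              Real.rpow_le_rpow_of_nonpos (by norm_num) hr ha0.le
            have h2 : ((1:ℝ)/2) ^ a = 2 ^ (-a) := by
              rw [one_div, Real.inv_rpow two_pos.le, ← Real.rpow_neg two_pos.le]
            have h3 : Real.exp (-(2*x)) ≤ Real.exp (-x) :=
              Real.exp_le_exp.2 (by linarith)
            calc Real.exp (-(2*x)) * (((t - x)/t) ^ a * ((t - x) ^ (-a) * G8 a (t - x)))
                ≤ Real.exp (-x) * (2 ^ (-a) * M) := by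
                  apply mul_le_mul h3 _ (mul_nonneg hra0 hχ0) (Real.exp_pos _).le
                  exact mul_le_mul (h2 ▸ h1) hχM hχ0 (Real.rpow_nonneg two_pos.le _)
              _ ≤ (2 ^ (-a) * M + M) * Real.exp (-x) := by
                  nlinarith [Real.exp_pos (-x), hMpos]
          · have hr : T/t ≤ (t - x)/t := by gcongr
            have hT0 : (0:ℝ) < T := lt_of_lt_of_le one_pos hT1
            have h1 : ((t - x)/t) ^ a ≤ (T/t) ^ a :=
              Real.rpow_le_rpow_of_nonpos (div_pos hT0 ht0) hr ha0.le
            have h2 : (T/t) ^ a = T ^ a * t ^ (-a) := by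
              rw [Real.div_rpow hT0.le ht0.le, Real.rpow_neg ht0.le, div_eq_mul_inv]
            have h3 : T ^ a ≤ 1 := Real.rpow_le_one_of_one_le_of_nonpos hT1 ha0.le
            have hta : (0:ℝ) ≤ t ^ (-a) := Real.rpow_nonneg ht0.le _
            have h4 : ((t - x)/t) ^ a ≤ t ^ (-a) := by
              refine h1.trans ?_
              rw [h2]
              nlinarith [Real.rpow_nonneg hT0.le a]
            have hexp_le : Real.exp (-(2*x)) ≤ Real.exp (-x) * Real.exp (-(1/2) * t) := by
              rw [← Real.exp_add]
              apply Real.exp_le_exp.2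
              linarith
            calc Real.exp (-(2*x)) * (((t - x)/t) ^ a * ((t - x) ^ (-a) * G8 a (t - x)))
                ≤ (Real.exp (-x) * Real.exp (-(1/2) * t)) * (t ^ (-a) * M) := by
                  apply mul_le_mul hexp_le _ (mul_nonneg hra0 hχ0)
                    (mul_nonneg (Real.exp_pos _).le (Real.exp_pos _).le)
                  exact mul_le_mul h4 hχM hχ0 hta
              _ = Real.exp (-x) * ((t ^ (-a) * Real.exp (-(1/2) * t)) * M) := by ring
              _ ≤ Real.exp (-x) * (1 * M) := by
                  apply mul_le_mul_of_nonneg_left _ (Real.exp_pos _).le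
                  exact mul_le_mul_of_nonneg_right hexp.le hMpos.le
              _ ≤ (2 ^ (-a) * M + M) * Real.exp (-x) := by
                  nlinarith [Real.exp_pos (-x), hMpos]
        · simp only [hP, Set.indicator_of_notMem hx, norm_zero]
          apply mul_nonneg (by positivity)
          exact Set.indicator_nonneg (fun y _ => (Real.exp_pos _).le) x
      · exact exp_ind_int.const_mul _
      · filter_upwards with x
        rcases le_or_gt x 0 with hx | hx
        · have h1 : ∀ t : ℝ, P t x = 0 := by
            intro t
            simp only [hP]
            apply Set.indicator_of_notMem
            simp only [Set.mem_Ioc, not_and_or]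
            left; linarith
          have h2 : flim x = 0 := by
            apply Set.indicator_of_notMem
            simpa using hx
          simp only [h1, h2]
          exact tendsto_const_nhds
        · have h2 : flim x = Real.exp (-(2*x)) * 2 ^ a := Set.indicator_of_mem hx _
          rw [h2]
          have hratio : Tendsto (fun t : ℝ => ((t - x)/t) ^ a) atTop (nhds 1) := by
            have hb : Tendsto (fun t : ℝ => (t - x)/t) atTop (nhds 1) := by
              apply Tendsto.congr' (f₁ := fun t : ℝ => 1 - x/t)
              · filter_upwards [eventually_gt_atTop (0:ℝ)] with t ht0
                field_simp
              · have hd : Tendsto (fun t : ℝ => x/t) atTop (nhds 0) :=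
                  Tendsto.div_atTop tendsto_const_nhds tendsto_id
                simpa using tendsto_const_nhds.sub hd
            have hc : ContinuousAt (fun y : ℝ => y ^ a) 1 :=
              Real.continuousAt_rpow_const 1 a (Or.inl one_ne_zero)
            have := hc.tendsto.comp hb
            simpa [Real.one_rpow, Function.comp_def] using this
          have hchi : Tendsto (fun t : ℝ => (t - x) ^ (-a) * G8 a (t - x)) atTop
              (nhds (2 ^ a)) := by
            have hcomp := (inner_tendsto a ha0.le).comp
              (tendsto_atTop_add_const_right atTop (-x) tendsto_id)
            apply hcomp.congr'
            filter_upwards [eventually_ge_atTop x] with t ht'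
            show (t + -x) ^ (-a) * g8 a (t + -x) = (t - x) ^ (-a) * G8 a (t - x)
            rw [← sub_eq_add_neg, g8_eq_G8 a (by linarith)]
          have hmain := (hratio.mul hchi).const_mul (Real.exp (-(2*x)))
          rw [one_mul] at hmain
          apply hmain.congr'
          filter_upwards [eventually_ge_atTop (T + x)] with t ht'
          have hmem : x ∈ Set.Ioc 0 (t - T) := Set.mem_Ioc.2 ⟨hx, by linarith⟩
          simp only [hP, Set.indicator_of_mem hmem]
    have hval : (∫ x, flim x) = 2 ^ a / 2 := by
      rw [hflim, MeasureTheory.integral_indicator measurableSet_Ioi,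
        MeasureTheory.integral_mul_const, half_int]
      ring
    rw [hval] at key
    exact key
  have hsum := term1.add term2
  rw [zero_add] at hsum
  apply hsum.congr'
  filter_upwards [eventually_ge_atTop T, eventually_ge_atTop (1:ℝ)] with t ht ht1
  have ht0 : (0:ℝ) < t := lt_of_lt_of_le one_pos ht1
  have h0T : (0:ℝ) ≤ T := by linarith
  have hTt : T ≤ t := ht
  have hint0t : IntervalIntegrable (fun u => Real.exp (2*u) * g8 a u) volume 0 t :=
    f_intble a ha ha0.le ht0.le
  have hint0T : IntervalIntegrable (fun u => Real.exp (2*u) * g8 a u) volume 0 T :=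
    f_intble a ha ha0.le h0T
  have hintTt : IntervalIntegrable (fun u => Real.exp (2*u) * g8 a u) volume T t := by
    apply hint0t.mono_set
    rw [Set.uIcc_of_le hTt, Set.uIcc_of_le ht0.le]
    exact Set.Icc_subset_Icc h0T le_rfl
  have hsplit : (∫ u in (0:ℝ)..t, Real.exp (2*u) * g8 a u)
      = C + ∫ u in T..t, Real.exp (2*u) * g8 a u :=
    (intervalIntegral.integral_add_adjacent_intervals hint0T hintTt).symm
  have hsub : (∫ u in T..t, Real.exp (2*u) * g8 a u)
      = ∫ x in (0:ℝ)..(t - T), Real.exp (2*(t - x)) * g8 a (t - x) := by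
    have h := intervalIntegral.integral_comp_sub_left (a := 0) (b := t - T)
      (fun u => Real.exp (2*u) * g8 a u) t
    rw [sub_zero, sub_sub_cancel] at h
    exact h.symm
  have hlast : (∫ x in (0:ℝ)..(t - T), t ^ (-a) * Real.exp (-(2*t)) *
      (Real.exp (2*(t - x)) * g8 a (t - x))) = ∫ x, P t x := by
    rw [intervalIntegral.integral_of_le (by linarith : (0:ℝ) ≤ t - T)]
    rw [hP, MeasureTheory.integral_indicator measurableSet_Ioc]
    apply MeasureTheory.setIntegral_congr_fun measurableSet_Ioc
    intro x hx
    have hx1 : (0:ℝ) < t - x := by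
      rcases hx with ⟨hx0, hx2⟩
      have : x < t := by linarith
      linarith
    have e1 : Real.exp (-(2*t)) * Real.exp (2*(t-x)) = Real.exp (-(2*x)) := by
      rw [← Real.exp_add]; ring_nf
    have hA : ((t - x) : ℝ) ^ a ≠ 0 := ne_of_gt (Real.rpow_pos_of_pos hx1 a)
    have hB : (t : ℝ) ^ a ≠ 0 := ne_of_gt (Real.rpow_pos_of_pos ht0 a)
    show t ^ (-a) * Real.exp (-(2*t)) * (Real.exp (2*(t - x)) * g8 a (t - x))
      = Real.exp (-(2*x)) * (((t - x)/t) ^ a * ((t - x) ^ (-a) * G8 a (t - x)))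
    rw [← g8_eq_G8 a hx1.le, Real.div_rpow hx1.le ht0.le, Real.rpow_neg hx1.le,
      Real.rpow_neg ht0.le, ← e1]
    field_simp
  rw [hsplit, hsub, mul_add, ← hlast, intervalIntegral.integral_const_mul]
  ring


theorem stmt_8 (H : ℝ) (hH : H ∈ Set.Ioo (0:ℝ) 1) (hH2 : H ≠ 1/2) :
    Tendsto (fun t : ℝ =>
        t ^ (2 - 2*H) * (2 * H * |2*H - 1| * Real.exp (-2*t) *
          ∫ u in (0:ℝ)..t, Real.exp u * ∫ v in (0:ℝ)..u, Real.exp v * (u + v) ^ (2*H - 2)))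
      atTop (nhds (H * |2*H - 1| * 2 ^ (2*H - 2))) := by
  obtain ⟨h0, h1⟩ := hH
  set a : ℝ := 2*H - 2 with ha
  have ha1 : (-2:ℝ) < a := by rw [ha]; linarith
  have ha0 : a < 0 := by rw [ha]; linarith
  have hout := (outer_tendsto a ha1 ha0).const_mul (2 * H * |2*H - 1|)
  have hlim : 2 * H * |2*H - 1| * (2 ^ a / 2) = H * |2*H - 1| * 2 ^ a := by ring
  rw [hlim] at hout
  apply hout.congr
  intro t
  have hpt : ∀ u : ℝ, Real.exp u * ∫ v in (0:ℝ)..u, Real.exp v * (u + v) ^ a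
      = Real.exp (2*u) * g8 a u := by
    intro u
    rw [lem1, ← mul_assoc, ← Real.exp_add, show u + u = 2*u from (two_mul u).symm, g8]
  rw [show (2:ℝ) - 2*H = -a by rw [ha]; ring]
  simp only [hpt, neg_mul]
  ring
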